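/- Let m ≥ 2 be an integer. Define weights w₁ = 1/(2m) and w_i = (1/m)·cos²((i−1)π/(2m)) for i = 2,...,m. Then for every integer p with 0 ≤ p ≤ m−2, ∑_{i=1}^{m} (−1)^i · w_i · ( cos((i−1)π/m) )^p = 0. -/

import Mathlib

open Real Complex Finset

noncomputable def om (m : ℕ) : ℂ := Complex.exp (↑Real.pi * Complex.I / m)

lemma om_ne_zero (m : ℕ) : om m ≠ 0 := Complex.exp_ne_zero _

lemma om_pow_m (m : ℕ) (hm : 0 < m) : om m ^ m = -1 := by
  have hmc : (m:ℂ) ≠ 0 := Nat.cast_ne_zero.mpr hm.ne'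
  rw [om, ← Complex.exp_nat_mul]
  have : (m:ℂ) * (↑Real.pi * Complex.I / m) = ↑Real.pi * Complex.I := by field_simp
  rw [this, Complex.exp_pi_mul_I]

lemma om_pow_ne_one (m k : ℕ) (hk0 : 0 < k) (hk : k < 2 * m) : om m ^ k ≠ 1 := by
  have hm : 0 < m := by omega
  have hmc : (m:ℂ) ≠ 0 := Nat.cast_ne_zero.mpr hm.ne'
  rw [om, ← Complex.exp_nat_mul]
  intro h
  rw [Complex.exp_eq_one_iff] at h
  rcases h with ⟨n, hn⟩
  have hpi : (Real.pi : ℂ) ≠ 0 := Complex.ofReal_ne_zero.mpr Real.pi_ne_zero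
  have hne : (Real.pi:ℂ) * Complex.I ≠ 0 := mul_ne_zero hpi Complex.I_ne_zero
  have h1 : (k : ℂ) = 2 * n * m := by
    field_simp at hn
    exact mul_right_cancel₀ hne (show (k:ℂ) * ((Real.pi:ℂ) * Complex.I)
      = (2*n*m) * ((Real.pi:ℂ)*Complex.I) by linear_combination ((Real.pi:ℂ)*Complex.I) * hn)
  have h2 : (k : ℤ) = 2 * n * m := by exact_mod_cast h1
  have hk0' : (0:ℤ) < k := by exact_mod_cast hk0
  have hk' : (k:ℤ) < 2 * m := by exact_mod_cast hk
  have hm' : (0:ℤ) < m := by exact_mod_cast hm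
  have hn1 : 1 ≤ n := by nlinarith
  nlinarith

lemma om_cos (m j : ℕ) (hm : 0 < m) :
    2 * om m ^ j * (Real.cos (j * Real.pi / m) : ℂ) = om m ^ (2*j) + 1 := by
  have hmc : (m:ℂ) ≠ 0 := Nat.cast_ne_zero.mpr hm.ne'
  have h1 : om m ^ j = Complex.exp ((j * Real.pi / m : ℝ) * Complex.I) := by
    rw [om, ← Complex.exp_nat_mul]
    push_cast
    ring_nf
  have h2 : om m ^ (2*j) = Complex.exp ((j * Real.pi / m : ℝ) * Complex.I) ^ 2 := by
    rw [mul_comm, pow_mul, h1, sq]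
  rw [h2, h1]
  set x : ℝ := j * Real.pi / m
  have hc : Complex.exp (x * Complex.I) + Complex.exp (-x * Complex.I)
      = 2 * (Real.cos x : ℂ) := by
    rw [Complex.exp_mul_I, Complex.exp_mul_I]
    push_cast
    simp [Complex.cos_neg, Complex.sin_neg]
    ring
  have hinv : Complex.exp (x * Complex.I) * Complex.exp (-x * Complex.I) = 1 := by
    rw [← Complex.exp_add]; ring_nf; exact Complex.exp_zero
  linear_combination (-(Complex.exp (x*Complex.I))) * hc + hinv


lemma key (m q : ℕ) (hq : q + 1 ≤ m) :
    ∑ j ∈ Finset.range m, (-1:ℝ)^j * Real.cos (j * Real.pi / m) ^ q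
      = if Even (m + q) then 0 else 1 := by
  have hm : 0 < m := by omega
  have hω := om_ne_zero m
  have hterm : ∀ j : ℕ, ((-1:ℂ)^j * (Real.cos (↑j * Real.pi / ↑m) : ℂ) ^ q) * 2^q
      = ∑ l ∈ Finset.range (q+1), (q.choose l : ℂ) * (om m ^ (m - q + 2*l))^j := by
    intro j
    have hoj : om m ^ j ≠ 0 := pow_ne_zero _ hω
    have hojq : (om m ^ j)^q ≠ 0 := pow_ne_zero _ hoj
    have hcos := om_cos m j hm
    have hP : (2 * om m ^ j * (Real.cos (↑j * Real.pi / ↑m) : ℂ))^q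
        = (om m ^ (2*j) + 1)^q := by rw [hcos]
    have hexp : (om m ^ (2*j) + 1)^q
        = ∑ l ∈ Finset.range (q+1), (om m ^ (2*j))^l * (q.choose l : ℂ) := by
      rw [add_pow]; simp
    apply mul_right_cancel₀ hojq
    calc ((-1:ℂ)^j * (Real.cos (↑j * Real.pi / ↑m) : ℂ) ^ q * 2^q) * (om m ^ j)^q
        = (om m ^ m)^j * (2 * om m ^ j * (Real.cos (↑j * Real.pi / ↑m) : ℂ))^q := by
          rw [om_pow_m m hm, mul_pow, mul_pow]; ring
      _ = (om m ^ m)^j * (om m ^ (2*j) + 1)^q := by rw [hP]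
      _ = ∑ l ∈ Finset.range (q+1), (om m ^ m)^j * ((om m ^ (2*j))^l * (q.choose l : ℂ)) := by
          rw [hexp, Finset.mul_sum]
      _ = ∑ l ∈ Finset.range (q+1), (q.choose l : ℂ) * (om m ^ (m - q + 2*l))^j * (om m ^ j)^q := by
          refine Finset.sum_congr rfl fun l hl => ?_
          have hlq : l ≤ q := by simpa [Nat.lt_succ_iff] using hl
          have e3 : om m ^ (m*j) * om m ^ (2*j*l) = om m ^ ((m-q+2*l)*j) * om m ^ (j*q) := by
            rw [← pow_add, ← pow_add]
            congr 1
            have h4 : (m - q + 2*l)*j + j*q = j*((m-q+2*l)+q) := by ring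
            have h5 : (m-q+2*l)+q = m + 2*l := by omega
            rw [h4, h5]; ring
          rw [← pow_mul, ← pow_mul, ← pow_mul, ← pow_mul]
          linear_combination (q.choose l : ℂ) * e3
      _ = (∑ l ∈ Finset.range (q+1), (q.choose l : ℂ) * (om m ^ (m - q + 2*l))^j) * (om m ^ j)^q := by
          rw [Finset.sum_mul]
  -- the complex sum times 2^q
  have hsum : (∑ j ∈ Finset.range m, (-1:ℂ)^j * (Real.cos (↑j * Real.pi / ↑m) : ℂ) ^ q) * 2^q
      = ∑ l ∈ Finset.range (q+1), (q.choose l : ℂ) *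
          ((om m ^ (m - q + 2*l))^m - 1) / (om m ^ (m - q + 2*l) - 1) := by
    rw [Finset.sum_mul]
    rw [Finset.sum_congr rfl fun j _ => hterm j]
    rw [Finset.sum_comm]
    refine Finset.sum_congr rfl fun l hl => ?_
    have hlq : l ≤ q := by simpa [Nat.lt_succ_iff] using hl
    have hk0 : 0 < m - q + 2*l := by omega
    have hk2 : m - q + 2*l < 2*m := by omega
    rw [← Finset.mul_sum, geom_sum_eq (om_pow_ne_one m _ hk0 hk2), mul_div_assoc]
  have hpowm : ∀ l, l ≤ q → (om m ^ (m-q+2*l))^m = if Even (m+q) then 1 else -1 := by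
    intro l hlq
    rw [← pow_mul, mul_comm, pow_mul, om_pow_m m hm]
    have hEiff : Even (m - q + 2*l) ↔ Even (m+q) := by
      rw [Nat.even_iff, Nat.even_iff]; omega
    by_cases hpar : Even (m+q)
    · rw [if_pos hpar, (hEiff.mpr hpar).neg_one_pow]
    · rw [if_neg hpar]
      refine Odd.neg_one_pow ?_
      rw [Nat.odd_iff]
      rw [Nat.even_iff] at hpar hEiff
      omega
  have hC : ∑ j ∈ Finset.range m, (-1:ℂ)^j * (Real.cos (↑j * Real.pi / ↑m) : ℂ) ^ q
      = if Even (m + q) then 0 else 1 := by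
    have h2q : (2:ℂ)^q ≠ 0 := pow_ne_zero _ two_ne_zero
    apply mul_right_cancel₀ h2q
    rw [hsum]
    by_cases hpar : Even (m+q)
    · rw [if_pos hpar, zero_mul]
      refine Finset.sum_eq_zero fun l hl => ?_
      have hlq : l ≤ q := by simpa [Nat.lt_succ_iff] using hl
      rw [hpowm l hlq, if_pos hpar]
      simp
    · rw [if_neg hpar, one_mul]
      have hS1 : ∑ l ∈ Finset.range (q+1), (q.choose l : ℂ) *
            ((om m ^ (m - q + 2*l))^m - 1) / (om m ^ (m - q + 2*l) - 1)
          = ∑ l ∈ Finset.range (q+1), (q.choose l : ℂ) * (-2 / (om m ^ (m - q + 2*l) - 1)) := by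
        refine Finset.sum_congr rfl fun l hl => ?_
        have hlq : l ≤ q := by simpa [Nat.lt_succ_iff] using hl
        rw [hpowm l hlq, if_neg hpar]
        ring
      rw [hS1]
      -- pairing
      have hpair : ∀ l, l ≤ q → (-2 / (om m ^ (m - q + 2*l) - 1))
          + (-2 / (om m ^ (m - q + 2*(q-l)) - 1)) = 2 := by
        intro l hlq
        have hk0 : 0 < m - q + 2*l := by omega
        have hk2 : m - q + 2*l < 2*m := by omega
        have hk0' : 0 < m - q + 2*(q-l) := by omega
        have hk2' : m - q + 2*(q-l) < 2*m := by omega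
        have ha : om m ^ (m-q+2*l) ≠ 1 := om_pow_ne_one m _ hk0 hk2
        have hb : om m ^ (m-q+2*(q-l)) ≠ 1 := om_pow_ne_one m _ hk0' hk2'
        have hab : om m ^ (m-q+2*l) * om m ^ (m-q+2*(q-l)) = 1 := by
          rw [← pow_add]
          have : (m-q+2*l) + (m-q+2*(q-l)) = m * 2 := by omega
          rw [this, pow_mul, om_pow_m m hm]
          ring
        have ha' : om m ^ (m-q+2*l) - 1 ≠ 0 := sub_ne_zero.mpr ha
        have hb' : om m ^ (m-q+2*(q-l)) - 1 ≠ 0 := sub_ne_zero.mpr hb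
        field_simp
        linear_combination -hab
      have hrefl : ∑ l ∈ Finset.range (q+1), (q.choose l : ℂ) * (-2 / (om m ^ (m - q + 2*l) - 1))
          = ∑ l ∈ Finset.range (q+1), (q.choose l : ℂ) * (-2 / (om m ^ (m - q + 2*(q-l)) - 1)) := by
        rw [← Finset.sum_range_reflect]
        refine Finset.sum_congr rfl fun l hl => ?_
        have hlq : l ≤ q := by simpa [Nat.lt_succ_iff] using hl
        have e1 : q + 1 - 1 - l = q - l := by omega
        rw [e1, Nat.choose_symm hlq]
      have hchoose : ∑ l ∈ Finset.range (q+1), (q.choose l : ℂ) = 2^q := by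
        have := Nat.sum_range_choose q
        have : ((∑ l ∈ Finset.range (q+1), q.choose l : ℕ) : ℂ) = ((2^q : ℕ) : ℂ) := by
          rw [this]
        push_cast at this
        exact this
      have h2S : (∑ l ∈ Finset.range (q+1), (q.choose l : ℂ) * (-2 / (om m ^ (m - q + 2*l) - 1)))
          + (∑ l ∈ Finset.range (q+1), (q.choose l : ℂ) * (-2 / (om m ^ (m - q + 2*l) - 1)))
          = 2^q * 2 := by
        nth_rewrite 2 [hrefl]
        rw [← Finset.sum_add_distrib]
        rw [Finset.sum_congr rfl fun l hl => ?_]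
        · rw [← Finset.sum_mul, hchoose]
        · have hlq : l ≤ q := by simpa [Nat.lt_succ_iff] using hl
          rw [← mul_add, hpair l hlq]
      linear_combination h2S / 2
  -- transfer to ℝ
  have hre : ((∑ j ∈ Finset.range m, (-1:ℝ)^j * Real.cos (↑j * Real.pi / ↑m) ^ q : ℝ) : ℂ)
      = ∑ j ∈ Finset.range m, (-1:ℂ)^j * (Real.cos (↑j * Real.pi / ↑m) : ℂ) ^ q := by
    push_cast
    rfl
  rw [hC] at hre
  by_cases hpar : Even (m+q)
  · rw [if_pos hpar] at hre ⊢
    exact_mod_cast hre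
  · rw [if_neg hpar] at hre ⊢
    exact_mod_cast hre


theorem chebyshev_alternating_moments (m : ℕ) (hm : 2 ≤ m) (p : ℕ) (hp : p ≤ m - 2) :
    ∑ i ∈ Finset.Icc 1 m, (-1 : ℝ) ^ i *
      (if i = 1 then 1 / (2 * (m : ℝ))
        else (1 / (m : ℝ)) * Real.cos (((i : ℝ) - 1) * Real.pi / (2 * m)) ^ 2) *
      (Real.cos (((i : ℝ) - 1) * Real.pi / m)) ^ p = 0 := by
  have hm0 : (m:ℝ) ≠ 0 := by
    have : 0 < m := by omega
    exact_mod_cast this.ne'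
  have hGsum : ∑ j ∈ Finset.range m,
      ((-1:ℝ)^j * Real.cos (j * Real.pi / m) ^ p
        + (-1:ℝ)^j * Real.cos (j * Real.pi / m) ^ (p+1)) = 1 := by
    rw [Finset.sum_add_distrib, key m p (by omega), key m (p+1) (by omega)]
    have hiff : Even (m + (p+1)) ↔ ¬ Even (m + p) := by
      rw [Nat.even_iff, Nat.even_iff]; omega
    by_cases h : Even (m + p)
    · rw [if_pos h, if_neg (by rw [hiff]; exact not_not_intro h)]; ring
    · rw [if_neg h, if_pos (hiff.mpr h)]; ring
  rw [← Finset.Ico_add_one_right_eq_Icc, Finset.sum_Ico_eq_sum_range]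
  have hm1 : m + 1 - 1 = m := rfl
  rw [hm1]
  have hterm : ∀ j ∈ Finset.range m,
      (-1 : ℝ) ^ (1+j) *
        (if 1+j = 1 then 1 / (2 * (m : ℝ))
          else (1 / (m : ℝ)) * Real.cos ((((1+j : ℕ) : ℝ) - 1) * Real.pi / (2 * m)) ^ 2) *
        (Real.cos ((((1+j : ℕ) : ℝ) - 1) * Real.pi / m)) ^ p
      = -(1/(2*(m:ℝ))) * ((-1:ℝ)^j * Real.cos (j * Real.pi / m) ^ p
            + (-1:ℝ)^j * Real.cos (j * Real.pi / m) ^ (p+1))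
        + (if j = 0 then 1/(2*(m:ℝ)) else 0) := by
    intro j _
    have harg : (((1+j : ℕ) : ℝ) - 1) = (j:ℝ) := by push_cast; ring
    rw [harg]
    by_cases hj : j = 0
    · subst hj
      simp only [if_pos rfl]
      norm_num
      ring
    · rw [if_neg (by omega), if_neg hj]
      have hcs : Real.cos ((j:ℝ) * Real.pi / (2 * m)) ^ 2
          = 1/2 + Real.cos ((j:ℝ) * Real.pi / m) / 2 := by
        rw [Real.cos_sq]
        congr 2
        field_simp
      rw [hcs]
      ring
  rw [Finset.sum_congr rfl hterm, Finset.sum_add_distrib, ← Finset.mul_sum, hGsum,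
    Finset.sum_ite_eq' (Finset.range m) 0 (fun _ => 1/(2*(m:ℝ))),
    if_pos (Finset.mem_range.mpr (by omega))]
  ring
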